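/- Let [X,d,m] be a metric random walk space with invariant reversible measure ν, Ω ⊂ X with ν(Ω_m) < ∞, φ ∈ L^{m,∞}(∂_mΩ, ν), and let u : Ω_m → ℝ with u|_Ω ∈ L^∞(Ω, ν) satisfy the Neumann boundary condition -∫_Ω a_p(x,y,u(y)-u(x)) dm_x(y) = φ(x) for ν-a.e. x ∈ ∂_mΩ, where a_p satisfies coercivity a_p(x,y,r)r ≥ c|r|^p and strict monotonicity in r. Then ‖u‖_{L^∞(∂_mΩ,ν)} ≤ ‖u‖_{L^∞(Ω,ν)} + c^{-1/(p-1)} ‖φ/m_{(·)}(Ω)‖_{L^∞(∂_mΩ,ν)}^{1/(p-1)}. -/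

import Mathlib

open MeasureTheory ProbabilityTheory ENNReal

/-- The `m`-boundary of `Ω`. -/
def mBoundary {X : Type*} [MeasurableSpace X] (κ : Kernel X X) (Ω : Set X) : Set X :=
  {x | x ∉ Ω ∧ 0 < κ x Ω}

/-- The `m`-closure of `Ω`. -/
def mClosure {X : Type*} [MeasurableSpace X] (κ : Kernel X X) (Ω : Set X) : Set X :=
  Ω ∪ mBoundary κ Ω

/-- Pointwise boundary estimate. -/
lemma aux_pointwise {α : Type*} [MeasurableSpace α] (μ : Measure α) [IsFiniteMeasure μ]
    (hμpos : 0 < μ Set.univ)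
    (p c M K ux : ℝ) (hp : 1 < p) (hc : 0 < c) (hM : 0 ≤ M) (hK : 0 ≤ K)
    (f g : α → ℝ)
    (hcoer : ∀ y, c * |f y - ux| ^ p ≤ g y * (f y - ux))
    (hub : ∀ᵐ y ∂μ, |f y| ≤ M)
    (hint : Integrable g μ)
    (hφ : |(- ∫ y, g y ∂μ) / (μ Set.univ).toReal| ≤ K) :
    |ux| ≤ M + (K / c) ^ (1 / (p - 1)) := by
  have hp1 : (0:ℝ) < p - 1 := by linarith
  set t := (K / c) ^ (1 / (p - 1)) with ht
  have htnn : 0 ≤ t := Real.rpow_nonneg (by positivity) _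
  by_contra h
  push_neg at h
  set s := |ux| - M with hs
  have hst : t < s := by simp only [hs]; linarith
  have hs0 : 0 < s := lt_of_le_of_lt htnn hst
  set σ : ℝ := if 0 < ux then 1 else -1 with hσ
  have hσabs : |σ| = 1 := by
    rcases lt_or_ge 0 ux with h'|h'
    · simp [hσ, h']
    · simp [hσ, not_lt.mpr h']
  have hV : 0 < (μ Set.univ).toReal := ENNReal.toReal_pos hμpos.ne' (measure_ne_top μ _)
  set V := (μ Set.univ).toReal
  -- pointwise bound on σ * g y
  have hpt : ∀ y, |f y| ≤ M → σ * g y ≤ -(c * s ^ (p - 1)) := by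
    intro y hy
    set r := f y - ux with hr
    have hco := hcoer y
    rw [← hr] at hco
    have hsp : s ^ (p-1) ≤ |r| ^ (p-1) → c * |r| ^ (p-1) ≥ c * s ^ (p-1) := fun hh =>
      mul_le_mul_of_nonneg_left hh hc.le
    rcases lt_trichotomy ux 0 with hux | hux | hux
    · -- ux < 0, |ux| = -ux, r = f y - ux ≥ -M + |ux| = s > 0
      have habs : |ux| = -ux := abs_of_neg hux
      have hrs : s ≤ r := by
        have := neg_le_of_abs_le hy
        simp only [hr, hs, habs]; linarith
      have hr0 : 0 < r := lt_of_lt_of_le hs0 hrs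
      have hrabs : |r| = r := abs_of_pos hr0
      have hsplit : |r| ^ p = |r| ^ (p-1) * r := by
        rw [hrabs, ← Real.rpow_add_one hr0.ne']; ring_nf
      have hglb : c * |r| ^ (p-1) ≤ g y := by
        have h1 : c * (|r| ^ (p-1) * r) ≤ g y * r := by rw [← hsplit]; exact hco
        nlinarith
      have hmono : s ^ (p-1) ≤ |r| ^ (p-1) := by
        rw [hrabs]; exact Real.rpow_le_rpow hs0.le hrs hp1.le
      have hσ1 : σ = -1 := by simp [hσ, not_lt.mpr hux.le]
      rw [hσ1]; nlinarith
    · exfalso; rw [hux] at h; simp at h; linarith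
    · -- ux > 0, r ≤ M - ux = -s
      have habs : |ux| = ux := abs_of_pos hux
      have hrs : r ≤ -s := by
        have := le_of_abs_le hy
        simp only [hr, hs, habs]; linarith
      have hr0 : r < 0 := lt_of_le_of_lt hrs (by linarith)
      have hrabs : |r| = -r := abs_of_neg hr0
      have hsplit : |r| ^ p = |r| ^ (p-1) * (-r) := by
        rw [show |r| ^ p = |r| ^ (p-1) * |r| from by
          rw [← Real.rpow_add_one (by rw [hrabs]; linarith : |r| ≠ 0)]; ring_nf, hrabs]
      have hglb : g y ≤ -(c * |r| ^ (p-1)) := by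
        have h1 : c * (|r| ^ (p-1) * (-r)) ≤ g y * r := by rw [← hsplit]; exact hco
        nlinarith
      have hmono : s ^ (p-1) ≤ |r| ^ (p-1) := by
        refine Real.rpow_le_rpow hs0.le ?_ hp1.le
        rw [hrabs]; linarith
      have hσ1 : σ = 1 := by simp [hσ, hux]
      rw [hσ1]; nlinarith
  -- integrate
  have haeb : ∀ᵐ y ∂μ, (fun y => σ * g y) y ≤ (fun _ => -(c * s ^ (p-1))) y :=
    hub.mono fun y hy => hpt y hy
  have hintσ : Integrable (fun y => σ * g y) μ := hint.const_mul σ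
  have hI : σ * ∫ y, g y ∂μ ≤ -(c * s ^ (p-1)) * V := by
    have := integral_mono_ae hintσ (integrable_const _) haeb
    rwa [integral_const, integral_const_mul, smul_eq_mul, mul_comm (μ.real Set.univ)] at this
  set I := ∫ y, g y ∂μ
  have hIabs : c * s ^ (p-1) * V ≤ |I| := by
    have h1 : |σ * I| = |I| := by rw [abs_mul, hσabs, one_mul]
    have h2 : c * s ^ (p-1) * V ≤ -(σ * I) := by nlinarith
    calc c * s ^ (p-1) * V ≤ -(σ * I) := h2
      _ ≤ |σ * I| := neg_le_abs _
      _ = |I| := h1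
  have hKs : c * s ^ (p-1) ≤ K := by
    have : |(-I) / V| = |I| / V := by rw [abs_div, abs_neg, abs_of_pos hV]
    rw [this] at hφ
    have := (div_le_iff₀ hV).mp hφ
    have h3 : c * s ^ (p-1) * V ≤ K * V := le_trans hIabs this
    exact le_of_mul_le_mul_right h3 hV
  -- conclude s ≤ t
  have hfin : s ≤ t := by
    have h1 : s ^ (p-1) ≤ K / c := (le_div_iff₀' hc).mpr hKs
    have h2 : (s ^ (p-1)) ^ (1/(p-1)) ≤ (K/c) ^ (1/(p-1)) :=
      Real.rpow_le_rpow (Real.rpow_nonneg hs0.le _) h1 (by positivity)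
    rwa [← Real.rpow_mul hs0.le, mul_one_div, div_self hp1.ne', Real.rpow_one] at h2
  linarith


lemma abs_le_toReal_of_enorm {v : ℝ} {B : ℝ≥0∞} (hB : B ≠ ⊤) (h : (‖v‖₊ : ℝ≥0∞) ≤ B) :
    |v| ≤ B.toReal := by
  have h2 := ENNReal.toReal_mono hB h
  simpa [Real.norm_eq_abs] using h2
/-- `L^∞` bound on the boundary for solutions of the
Dipierro–Ros-Oton–Valdinoci Neumann condition: if `u|_Ω ∈ L^∞(Ω,ν)`,
`φ ∈ L^{m,∞}(∂_mΩ,ν)` and `-∫_Ω a_p(x,y,u(y)-u(x)) dm_x(y) = φ(x)` a.e. on `∂_mΩ`, then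
`‖u‖_{L^∞(∂_mΩ,ν)} ≤ ‖u‖_{L^∞(Ω,ν)} + c^{-1/(p-1)} ‖φ/m_·(Ω)‖_{L^∞(∂_mΩ,ν)}^{1/(p-1)}`. -/
theorem boundary_linfty_bound
    {X : Type*} [MeasurableSpace X]
    (κ : Kernel X X) [IsMarkovKernel κ]
    (ν : Measure X) [SigmaFinite ν]
    (habs : ∀ x, κ x ≪ ν)
    (Ω : Set X) (hΩ : MeasurableSet Ω)
    (hfin : ν (mClosure κ Ω) < ⊤)
    (p c : ℝ) (hp : 1 < p) (hc : 0 < c)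
    (a : X → X → ℝ → ℝ)
    (ham : Measurable (fun z : (X × X) × ℝ => a z.1.1 z.1.2 z.2))
    (hcoer : ∀ x y : X, ∀ r : ℝ, c * |r| ^ p ≤ a x y r * r)
    (hmono : ∀ x y : X, ∀ r s : ℝ, r ≠ s → 0 < (a x y r - a x y s) * (r - s))
    (u : X → ℝ) (hum : Measurable u)
    (huL : eLpNorm u ⊤ (ν.restrict Ω) < ⊤)
    (φ : X → ℝ) (hφm : Measurable φ)
    (hφL : eLpNorm (fun x => φ x / (κ x Ω).toReal) ⊤ (ν.restrict (mBoundary κ Ω)) < ⊤)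
    (hbc : ∀ᵐ x ∂(ν.restrict (mBoundary κ Ω)),
      Integrable (fun y => a x y (u y - u x)) ((κ x).restrict Ω) ∧
        - ∫ y in Ω, a x y (u y - u x) ∂(κ x) = φ x) :
    eLpNorm u ⊤ (ν.restrict (mBoundary κ Ω))
      ≤ eLpNorm u ⊤ (ν.restrict Ω)
        + (ENNReal.ofReal c)⁻¹ ^ (1 / (p - 1)) *
          (eLpNorm (fun x => φ x / (κ x Ω).toReal) ⊤
            (ν.restrict (mBoundary κ Ω))) ^ (1 / (p - 1)) := by
  have hp1 : (0:ℝ) < p - 1 := by linarith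
  have he : (0:ℝ) ≤ 1 / (p - 1) := by positivity
  have hbd_meas : MeasurableSet (mBoundary κ Ω) := by
    have : mBoundary κ Ω = Ωᶜ ∩ {x | 0 < κ x Ω} := rfl
    rw [this]
    exact hΩ.compl.inter (measurableSet_lt measurable_const (κ.measurable_coe hΩ))
  set Minf := eLpNorm u ⊤ (ν.restrict Ω) with hMinf
  set Kinf := eLpNorm (fun x => φ x / (κ x Ω).toReal) ⊤ (ν.restrict (mBoundary κ Ω)) with hKinf
  set M := Minf.toReal with hM
  set K := Kinf.toReal with hK
  have hMnn : 0 ≤ M := ENNReal.toReal_nonneg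
  have hKnn : 0 ≤ K := ENNReal.toReal_nonneg
  set t := (K / c) ^ (1 / (p - 1)) with ht
  have htnn : 0 ≤ t := Real.rpow_nonneg (by positivity) _
  -- a.e. bound on u over Ω
  have hub : ∀ᵐ y ∂(ν.restrict Ω), |u y| ≤ M := by
    filter_upwards [ae_le_eLpNormEssSup (f := u) (μ := ν.restrict Ω)] with y hy
    exact abs_le_toReal_of_enorm huL.ne (by rwa [hMinf, eLpNorm_exponent_top])
  -- the bad set has ν-measure zero in Ω
  set N := {y | M < |u y|} with hN
  have hNmeas : MeasurableSet N := measurableSet_lt measurable_const hum.abs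
  have hνNΩ : ν (N ∩ Ω) = 0 := by
    have h0 : (ν.restrict Ω) N = 0 := by
      have h1 := ae_iff.mp hub
      show (ν.restrict Ω) {y | M < |u y|} = 0
      simpa [not_le] using h1
    rwa [Measure.restrict_apply hNmeas] at h0
  -- a.e. bound on φ / κ·Ω over the boundary
  have hφb : ∀ᵐ x ∂(ν.restrict (mBoundary κ Ω)), |φ x / (κ x Ω).toReal| ≤ K := by
    filter_upwards [ae_le_eLpNormEssSup (f := fun x => φ x / (κ x Ω).toReal)
      (μ := ν.restrict (mBoundary κ Ω))] with x hx
    exact abs_le_toReal_of_enorm hφL.ne (by rwa [hKinf, eLpNorm_exponent_top])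
  -- main a.e. estimate on the boundary
  have hkey : ∀ᵐ x ∂(ν.restrict (mBoundary κ Ω)), ‖u x‖ ≤ M + t := by
    filter_upwards [hbc, hφb, ae_restrict_mem hbd_meas] with x hx hφx hxb
    obtain ⟨hint, heq⟩ := hx
    obtain ⟨hxΩ, hκpos⟩ := hxb
    rw [Real.norm_eq_abs]
    have hμpos : 0 < ((κ x).restrict Ω) Set.univ := by
      rwa [Measure.restrict_apply_univ]
    have hubx : ∀ᵐ y ∂((κ x).restrict Ω), |u y| ≤ M := by
      rw [ae_iff]
      have : {y | ¬ |u y| ≤ M} = N := by ext y; simp [hN, not_le]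
      rw [this, Measure.restrict_apply hNmeas]
      exact habs x hνNΩ
    have hφ' : |(- ∫ y, a x y (u y - u x) ∂((κ x).restrict Ω)) /
        (((κ x).restrict Ω) Set.univ).toReal| ≤ K := by
      rw [Measure.restrict_apply_univ]
      rw [show (∫ y, a x y (u y - u x) ∂((κ x).restrict Ω)) =
        ∫ y in Ω, a x y (u y - u x) ∂(κ x) from rfl, heq]
      exact hφx
    exact aux_pointwise ((κ x).restrict Ω) hμpos p c M K (u x) hp hc hMnn hKnn
      u (fun y => a x y (u y - u x)) (fun y => hcoer x y (u y - u x)) hubx hint hφ'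
  -- conclude
  have hle : eLpNorm u ⊤ (ν.restrict (mBoundary κ Ω)) ≤ ENNReal.ofReal (M + t) := by
    rw [eLpNorm_exponent_top]
    exact eLpNormEssSup_le_of_ae_bound hkey
  refine hle.trans ?_
  have hMeq : ENNReal.ofReal M = Minf := ENNReal.ofReal_toReal huL.ne
  have hKeq : ENNReal.ofReal K = Kinf := ENNReal.ofReal_toReal hφL.ne
  have hteq : ENNReal.ofReal t
      = (ENNReal.ofReal c)⁻¹ ^ (1 / (p - 1)) * Kinf ^ (1 / (p - 1)) := by
    rw [ht, ← ENNReal.ofReal_rpow_of_nonneg (by positivity) he]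
    rw [div_eq_mul_inv, ENNReal.ofReal_mul hKnn, ENNReal.ofReal_inv_of_pos hc,
      ENNReal.mul_rpow_of_nonneg _ _ he, hKeq, mul_comm]
  rw [ENNReal.ofReal_add hMnn htnn, hMeq, hteq]
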